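/- Let L = (ℓ_j)_{j≥1} be a fractal string of Minkowski dimension D ∈ (0,1), and set α_* = liminf_{j→∞} ℓ_j · j^{1/D} and α^* = limsup_{j→∞} ℓ_j · j^{1/D}. Then L is Minkowski nondegenerate (i.e., 0 < M_* ≤ M^* < ∞) if and only if 0 < α_* ≤ α^* < ∞. -/

import Mathlib

open Filter Topology

/-- A fractal string: a nonincreasing, positive, summable sequence of lengths
`ℓ 0 ≥ ℓ 1 ≥ ⋯ > 0` (indexed from `0`, representing `ℓ_1, ℓ_2, …`). -/
def IsFractalString (ℓ : ℕ → ℝ) : Prop :=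
  (∀ j, 0 < ℓ j) ∧ Antitone ℓ ∧ Summable ℓ

/-- The volume `V(ε) = ∑ⱼ min(ℓⱼ, 2ε)` of the inner ε-neighborhood of the boundary. -/
noncomputable def stringVol (ℓ : ℕ → ℝ) (ε : ℝ) : ℝ :=
  ∑' j, min (ℓ j) (2 * ε)

/-- Upper `d`-dimensional Minkowski content `limsup_{ε→0⁺} V(ε)/ε^{1-d}`. -/
noncomputable def upperContent (ℓ : ℕ → ℝ) (d : ℝ) : ENNReal :=
  Filter.limsup (fun ε : ℝ => ENNReal.ofReal (stringVol ℓ ε / ε ^ (1 - d))) (𝓝[>] 0)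

/-- Lower `d`-dimensional Minkowski content `liminf_{ε→0⁺} V(ε)/ε^{1-d}`. -/
noncomputable def lowerContent (ℓ : ℕ → ℝ) (d : ℝ) : ENNReal :=
  Filter.liminf (fun ε : ℝ => ENNReal.ofReal (stringVol ℓ ε / ε ^ (1 - d))) (𝓝[>] 0)

/-- The Minkowski dimension `D = inf {d ≥ 0 : M*_d < ∞}`. -/
noncomputable def minkDim (ℓ : ℕ → ℝ) : ℝ :=
  sInf {d : ℝ | 0 ≤ d ∧ upperContent ℓ d < ⊤}

/-- The spectral (frequency) counting function `N_ν(x) = ∑ⱼ ⌊ℓⱼ x⌋`. -/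
noncomputable def spectralCount (ℓ : ℕ → ℝ) (x : ℝ) : ℝ :=
  ∑' j, (⌊ℓ j * x⌋₊ : ℝ)

/-- The Weyl term `W(x) = (∑ⱼ ℓⱼ) x`. -/
noncomputable def weylTerm (ℓ : ℕ → ℝ) (x : ℝ) : ℝ :=
  (∑' j, ℓ j) * x

/-- The geometric counting function `N_L(x) = #{j ≥ 1 : ℓⱼ⁻¹ ≤ x}`. -/
noncomputable def geomCount (ℓ : ℕ → ℝ) (x : ℝ) : ℝ :=
  (({j : ℕ | (ℓ j)⁻¹ ≤ x}).ncard : ℝ)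

/-- The "asymptotic second term" `φ_ν(x) = W(x) - N_ν(x)`. -/
noncomputable def phiNu (ℓ : ℕ → ℝ) (x : ℝ) : ℝ :=
  weylTerm ℓ x - spectralCount ℓ x

/-- `L` is Minkowski measurable (in dimension `D`) with Minkowski content `M`:
`V(ε)/ε^{1-D} → M` as `ε → 0⁺`. -/
def MinkMeasurableWith (ℓ : ℕ → ℝ) (D M : ℝ) : Prop :=
  Tendsto (fun ε : ℝ => stringVol ℓ ε / ε ^ (1 - D)) (𝓝[>] (0:ℝ)) (𝓝 M)

/-- `L` is Minkowski measurable in dimension `D` (with some positive finite content). -/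
def MinkMeasurable (ℓ : ℕ → ℝ) (D : ℝ) : Prop :=
  ∃ M : ℝ, 0 < M ∧ MinkMeasurableWith ℓ D M

/-- Hypothesis (6.1): `N_ν(x) = W(x) - C x^D + o(x^D)` as `x → +∞`. -/
def SpectralAsymp (ℓ : ℕ → ℝ) (D C : ℝ) : Prop :=
  Tendsto (fun x : ℝ => (spectralCount ℓ x - (weylTerm ℓ x - C * x ^ D)) / x ^ D)
    atTop (𝓝 0)

/-- The inverse spectral problem `(ISP)_D`: every fractal string of Minkowski
dimension `D` satisfying (6.1) is Minkowski measurable. -/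
def ISP (D : ℝ) : Prop :=
  ∀ ℓ : ℕ → ℝ, IsFractalString ℓ → minkDim ℓ = D →
    (∃ C : ℝ, C ≠ 0 ∧ SpectralAsymp ℓ D C) → MinkMeasurable ℓ D

open Real Finset

set_option maxHeartbeats 1600000

private lemma bern_aux {q u : ℝ} (hq : 0 < q) (hu0 : 0 < u) (hu1 : u ≤ 1) :
    1 + q * (1 - u) ≤ u ^ (-q) := by
  rcases le_total q 1 with hq1 | hq1
  · have h1 : u ^ q ≤ 1 + q * (u - 1) := by
      have := rpow_one_add_le_one_add_mul_self (s := u - 1) (by linarith) hq.le hq1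
      simpa using this
    have hz0 : 0 ≤ q * (1 - u) := by nlinarith
    have hup : 0 < u ^ q := rpow_pos_of_pos hu0 q
    have h2 : (1 + q * (1 - u)) * u ^ q ≤ 1 := by
      nlinarith [mul_le_mul_of_nonneg_left h1 (show (0:ℝ) ≤ 1 + q * (1 - u) by linarith)]
    rw [rpow_neg hu0.le, inv_eq_one_div, le_div_iff₀ hup]
    exact h2
  · have hiv : 0 < u⁻¹ := inv_pos.mpr hu0
    have hmul : u * u⁻¹ = 1 := mul_inv_cancel₀ hu0.ne'
    have hinv : 1 ≤ u⁻¹ := by nlinarith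
    have hs : -1 ≤ u⁻¹ - 1 := by linarith
    have h1 := one_add_mul_self_le_rpow_one_add hs hq1
    have h2 : 1 + (u⁻¹ - 1) = u⁻¹ := by ring
    rw [h2] at h1
    have h3 : u ^ (-q) = (u⁻¹) ^ q := by
      rw [rpow_neg hu0.le, inv_rpow hu0.le]
    have h4 : 1 - u ≤ u⁻¹ - 1 := by nlinarith
    have h5 : q * (1 - u) ≤ q * (u⁻¹ - 1) := by nlinarith
    rw [h3]; linarith

private lemma telescope_ineq {q x : ℝ} (hq : 0 < q) (hx : 1 ≤ x) :
    q * (x + 1) ^ (-(q + 1)) ≤ x ^ (-q) - (x + 1) ^ (-q) := by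
  have hx0 : (0:ℝ) < x := by linarith
  have hx1 : (0:ℝ) < x + 1 := by linarith
  set u : ℝ := x / (x + 1) with hu
  have hu0 : 0 < u := div_pos hx0 hx1
  have hu1 : u ≤ 1 := by rw [hu, div_le_one hx1]; linarith
  have hb := bern_aux hq hu0 hu1
  have h1mu : (1 - u) * (x + 1) = 1 := by
    rw [hu]; field_simp; ring
  have hx_eq : u * (x + 1) = x := div_mul_cancel₀ x hx1.ne'
  have hxq : x ^ (-q) = u ^ (-q) * (x + 1) ^ (-q) := by
    conv_lhs => rw [← hx_eq]
    exact mul_rpow hu0.le hx1.le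
  have hsplit : (x + 1) ^ (-(q + 1)) = (x + 1) ^ (-q) * (x + 1)⁻¹ := by
    rw [show -(q + 1) = -q + (-1) by ring, rpow_add hx1, rpow_neg_one]
  have hpow : (0:ℝ) < (x + 1) ^ (-q) := rpow_pos_of_pos hx1 _
  have key : (1 + q * (1 - u)) * (x + 1) ^ (-q) ≤ u ^ (-q) * (x + 1) ^ (-q) :=
    mul_le_mul_of_nonneg_right hb hpow.le
  have hxinv : (x + 1) * (x + 1)⁻¹ = 1 := mul_inv_cancel₀ hx1.ne'
  have h1mu' : 1 - u = (x + 1)⁻¹ := eq_inv_of_mul_eq_one_left h1mu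
  rw [hxq, hsplit, ← h1mu']
  nlinarith [key]


private lemma summable_shift {p : ℝ} (hp : 1 < p) (b : ℝ) (hb : 1 ≤ b) :
    Summable (fun i : ℕ => ((i : ℝ) + b) ^ (-p)) := by
  have h0 : Summable (fun n : ℕ => 1 / (n : ℝ) ^ p) :=
    Real.summable_one_div_nat_rpow.mpr hp
  have h1 : Summable (fun n : ℕ => 1 / ((n + 1 : ℕ) : ℝ) ^ p) :=
    (summable_nat_add_iff 1).mpr h0
  have h2 : Summable (fun n : ℕ => ((n : ℝ) + 1) ^ (-p)) := by
    refine h1.congr fun n => ?_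
    rw [rpow_neg (by positivity), inv_eq_one_div]
    push_cast
    ring_nf
  refine Summable.of_nonneg_of_le (fun i => by positivity) (fun i => ?_) h2
  exact rpow_le_rpow_of_nonpos (by positivity) (by linarith) (by linarith)

private lemma tail_sum_le {p : ℝ} (hp : 1 < p) (n : ℕ) (hn : 1 ≤ n) :
    ∑' i : ℕ, ((i : ℝ) + n + 1) ^ (-p) ≤ (n : ℝ) ^ (1 - p) / (p - 1) := by
  have hq : (0:ℝ) < p - 1 := by linarith
  have hn1 : (1:ℝ) ≤ (n : ℝ) := by exact_mod_cast hn
  apply Real.tsum_le_of_sum_range_le (fun i => by positivity)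
  intro m
  set g : ℕ → ℝ := fun i => ((i : ℝ) + n) ^ (-(p - 1)) with hg
  have step : ∀ i : ℕ, ((i : ℝ) + n + 1) ^ (-p) ≤ (1 / (p - 1)) * (g i - g (i + 1)) := by
    intro i
    have hx : (1:ℝ) ≤ (i : ℝ) + n := by
      have : (0:ℝ) ≤ (i : ℝ) := Nat.cast_nonneg i
      linarith
    have h := telescope_ineq hq hx
    rw [show -(p - 1 + 1) = -p by ring] at h
    have hgi : g i = ((i : ℝ) + n) ^ (-(p - 1)) := rfl
    have hgi1 : g (i + 1) = ((i : ℝ) + n + 1) ^ (-(p - 1)) := by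
      show (((i + 1 : ℕ) : ℝ) + n) ^ (-(p - 1)) = _
      push_cast; ring_nf
    rw [hgi, hgi1]
    calc ((i : ℝ) + n + 1) ^ (-p)
        = (1 / (p - 1)) * ((p - 1) * ((i : ℝ) + n + 1) ^ (-p)) := by field_simp
      _ ≤ (1 / (p - 1)) * (((i : ℝ) + n) ^ (-(p - 1)) - ((i : ℝ) + n + 1) ^ (-(p - 1))) :=
          mul_le_mul_of_nonneg_left h (by positivity)
  calc ∑ i ∈ range m, ((i : ℝ) + n + 1) ^ (-p)
      ≤ ∑ i ∈ range m, (1 / (p - 1)) * (g i - g (i + 1)) := sum_le_sum fun i _ => step i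
    _ = (1 / (p - 1)) * (g 0 - g m) := by rw [← mul_sum, sum_range_sub' g m]
    _ ≤ (1 / (p - 1)) * (n : ℝ) ^ (1 - p) := by
        apply mul_le_mul_of_nonneg_left _ (by positivity)
        have hg0 : g 0 = (n : ℝ) ^ (1 - p) := by
          show (((0 : ℕ) : ℝ) + n) ^ (-(p - 1)) = (n : ℝ) ^ (1 - p)
          rw [show ((0 : ℕ) : ℝ) + n = (n : ℝ) by push_cast; ring,
            show -(p - 1) = 1 - p by ring]
        have hgm : 0 ≤ g m := by positivity
        linarith
    _ = (n : ℝ) ^ (1 - p) / (p - 1) := by ring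

private lemma rpow_rpow {A : ℝ} (hA : 0 ≤ A) {e f g : ℝ} (h : e * f = g) :
    (A ^ e) ^ f = A ^ g := by rw [← Real.rpow_mul hA, h]

private lemma summable_shift'' {p : ℝ} (hp : 1 < p) (n : ℕ) :
    Summable (fun i : ℕ => ((i : ℝ) + n + 1) ^ (-p)) := by
  have h := summable_shift hp ((n : ℝ) + 1) (le_add_of_nonneg_left (Nat.cast_nonneg n))
  exact h.congr fun i => by ring_nf

section Vol
variable {ℓ : ℕ → ℝ}

private lemma summable_min (hpos : ∀ j, 0 < ℓ j) (hsum : Summable ℓ) {c : ℝ} (hc : 0 ≤ c) :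
    Summable (fun i => min (ℓ i) c) :=
  Summable.of_nonneg_of_le (fun i => le_min (hpos i).le hc) (fun i => min_le_left _ _) hsum

private lemma vol_ge (hpos : ∀ j, 0 < ℓ j) (hant : Antitone ℓ) (hsum : Summable ℓ)
    {ε : ℝ} (hε : 0 < ε) (n : ℕ) (hn : 2 * ε ≤ ℓ n) :
    ((n : ℝ) + 1) * (2 * ε) ≤ stringVol ℓ ε := by
  have hs := summable_min hpos hsum (show (0:ℝ) ≤ 2 * ε by linarith)
  have h1 : ∀ i ∈ Finset.range (n + 1), (2 * ε) ≤ min (ℓ i) (2 * ε) := by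
    intro i hi
    rw [Finset.mem_range] at hi
    exact le_min (le_trans hn (hant (by omega))) le_rfl
  calc ((n : ℝ) + 1) * (2 * ε) = ∑ _i ∈ Finset.range (n + 1), (2 * ε) := by
        rw [Finset.sum_const, Finset.card_range, nsmul_eq_mul]; push_cast; ring
    _ ≤ ∑ i ∈ Finset.range (n + 1), min (ℓ i) (2 * ε) := Finset.sum_le_sum h1
    _ ≤ stringVol ℓ ε := Summable.sum_le_tsum _ (fun i _ => le_min (hpos i).le (by linarith)) hs

private lemma vol_le (hpos : ∀ j, 0 < ℓ j) (hsum : Summable ℓ)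
    {ε : ℝ} (hε : 0 < ε) (n : ℕ) {T : ℝ}
    (hT : ∑' i, min (ℓ (i + n)) (2 * ε) ≤ T) :
    stringVol ℓ ε ≤ (n : ℝ) * (2 * ε) + T := by
  have hs := summable_min hpos hsum (show (0:ℝ) ≤ 2 * ε by linarith)
  rw [stringVol, ← Summable.sum_add_tsum_nat_add n hs]
  have h1 : ∑ i ∈ Finset.range n, min (ℓ i) (2 * ε) ≤ (n : ℝ) * (2 * ε) := by
    calc ∑ i ∈ Finset.range n, min (ℓ i) (2 * ε) ≤ ∑ _i ∈ Finset.range n, (2 * ε) :=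
          Finset.sum_le_sum fun i _ => min_le_right _ _
      _ = (n : ℝ) * (2 * ε) := by
          rw [Finset.sum_const, Finset.card_range, nsmul_eq_mul]
  exact add_le_add h1 hT

set_option maxHeartbeats 1000000 in
private lemma vol_upper {D C : ℝ} (hD0 : 0 < D) (hD1 : D < 1) (hC : 0 < C)
    (hpos : ∀ j, 0 < ℓ j) (hsum : Summable ℓ)
    (hb : ∀ j : ℕ, ℓ j ≤ C * ((j : ℝ) + 1) ^ (-(1 / D)))
    {ε : ℝ} (hε : 0 < ε) (hε2 : 2 * ε ≤ C) :
    stringVol ℓ ε ≤ (2 + 1 / (1 / D - 1)) * C ^ D * (2 * ε) ^ (1 - D) := by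
  have hp : 1 < 1 / D := by rw [lt_div_iff₀ hD0]; linarith
  have h2e : (0:ℝ) < 2 * ε := by linarith
  set x := (C / (2 * ε)) ^ D with hxdef
  have hbase : 1 ≤ C / (2 * ε) := (one_le_div h2e).mpr hε2
  have hbp : 0 < C / (2 * ε) := by linarith
  have hx1 : 1 ≤ x := by
    rw [hxdef]
    calc (1:ℝ) = 1 ^ D := (Real.one_rpow D).symm
      _ ≤ (C / (2 * ε)) ^ D := Real.rpow_le_rpow zero_le_one hbase hD0.le
  set n := ⌈x⌉₊ with hndef
  have hn1 : 1 ≤ n := Nat.ceil_pos.mpr (by linarith)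
  have hxn : x ≤ (n : ℝ) := Nat.le_ceil x
  have hn2x : (n : ℝ) ≤ 2 * x := le_trans (Nat.ceil_lt_add_one (by linarith)).le (by linarith)
  have hTsum : ∑' i, min (ℓ (i + n)) (2 * ε) ≤ C * ((n : ℝ) ^ (1 - 1 / D) / (1 / D - 1)) := by
    calc ∑' i, min (ℓ (i + n)) (2 * ε)
        ≤ ∑' (i : ℕ), C * ((i : ℝ) + n + 1) ^ (-(1 / D)) := by
          refine Summable.tsum_le_tsum (fun i => ?_)
            ((summable_nat_add_iff n).mpr (summable_min hpos hsum (by linarith)))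
            ((summable_shift'' hp n).mul_left C)
          refine le_trans (min_le_left _ _) (le_trans (hb (i + n)) ?_)
          apply le_of_eq; congr 2; push_cast; ring
      _ = C * ∑' (i : ℕ), ((i : ℝ) + n + 1) ^ (-(1 / D)) := tsum_mul_left
      _ ≤ C * ((n : ℝ) ^ (1 - 1 / D) / (1 / D - 1)) :=
          mul_le_mul_of_nonneg_left (tail_sum_le hp n hn1) hC.le
  have hmain := vol_le hpos hsum hε n hTsum
  have hne : ((2 * ε) ^ D) ≠ 0 := (Real.rpow_pos_of_pos h2e D).ne'
  have comp1 : x * (2 * ε) = C ^ D * (2 * ε) ^ (1 - D) := by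
    rw [hxdef, Real.div_rpow hC.le h2e.le, Real.rpow_sub h2e, Real.rpow_one]
    field_simp
  have comp2 : C * x ^ (1 - 1 / D) = C ^ D * (2 * ε) ^ (1 - D) := by
    rw [hxdef, rpow_rpow hbp.le (show D * (1 - 1 / D) = D - 1 by field_simp),
      Real.div_rpow hC.le h2e.le]
    have hne2 : (2 * ε) ^ (D - 1) ≠ 0 := (Real.rpow_pos_of_pos h2e _).ne'
    have e1 : C * C ^ (D - 1) = C ^ D := by
      nth_rewrite 1 [← Real.rpow_one C]
      rw [← Real.rpow_add hC]; congr 1; ring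
    have e2 : (2 * ε) ^ (1 - D) * (2 * ε) ^ (D - 1) = 1 := by
      rw [← Real.rpow_add h2e]; norm_num
    rw [← mul_div_assoc, div_eq_iff hne2, e1, mul_assoc, e2, mul_one]
  have hq1 : 0 < 1 / D - 1 := by linarith
  have hxp : (n : ℝ) ^ (1 - 1 / D) ≤ x ^ (1 - 1 / D) :=
    Real.rpow_le_rpow_of_nonpos (by linarith) hxn (by linarith)
  have h1 : (n : ℝ) * (2 * ε) ≤ 2 * (C ^ D * (2 * ε) ^ (1 - D)) := by
    calc (n : ℝ) * (2 * ε) ≤ (2 * x) * (2 * ε) := by nlinarith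
      _ = 2 * (C ^ D * (2 * ε) ^ (1 - D)) := by rw [mul_assoc, comp1]
  have h2 : C * ((n : ℝ) ^ (1 - 1 / D) / (1 / D - 1)) ≤
      (C ^ D * (2 * ε) ^ (1 - D)) * (1 / (1 / D - 1)) := by
    calc C * ((n : ℝ) ^ (1 - 1 / D) / (1 / D - 1))
        = (C * (n : ℝ) ^ (1 - 1 / D)) / (1 / D - 1) := by ring
      _ ≤ (C * x ^ (1 - 1 / D)) / (1 / D - 1) := by gcongr
      _ = (C ^ D * (2 * ε) ^ (1 - D)) * (1 / (1 / D - 1)) := by rw [comp2]; ring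
  nlinarith [hmain, h1, h2]
end Vol

private lemma vol_lower {ℓ : ℕ → ℝ} {D c : ℝ} (hD0 : 0 < D) (hD1 : D < 1) (hc : 0 < c)
    (hpos : ∀ j, 0 < ℓ j) (hant : Antitone ℓ) (hsum : Summable ℓ) (J : ℕ)
    (hb : ∀ j, J ≤ j → c * ((j : ℝ) + 1) ^ (-(1 / D)) ≤ ℓ j)
    {ε : ℝ} (hε : 0 < ε) (hεs : ((J : ℝ) + 2) ≤ (c / (2 * ε)) ^ D) :
    (c / 2) ^ D ≤ stringVol ℓ ε / ε ^ (1 - D) := by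
  have h2e : (0:ℝ) < 2 * ε := by linarith
  set x := (c / (2 * ε)) ^ D with hxdef
  have hx0 : 0 < x := Real.rpow_pos_of_pos (div_pos hc h2e) D
  have hx2 : (2:ℝ) ≤ x := by
    have : (0:ℝ) ≤ (J : ℝ) := Nat.cast_nonneg J
    linarith
  set m := ⌊x⌋₊ with hmdef
  have hm2 : J + 2 ≤ m := by
    rw [hmdef]
    apply Nat.le_floor
    push_cast
    linarith
  have hmx : (m : ℝ) ≤ x := Nat.floor_le hx0.le
  have hm1 : x - 1 < (m : ℝ) := Nat.sub_one_lt_floor x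
  have hm0 : 1 ≤ m := by omega
  set n := m - 1 with hndef
  have hn : n + 1 = m := by omega
  have hJn : J ≤ n := by omega
  have hℓn : 2 * ε ≤ ℓ n := by
    have hbn := hb n hJn
    have hcast : ((n : ℝ) + 1) = (m : ℝ) := by
      rw [← hn]; push_cast; ring
    have hm0' : (0:ℝ) < (m : ℝ) := by
      have : (1:ℕ) ≤ m := hm0
      exact_mod_cast Nat.pos_of_ne_zero (by omega)
    have hmono : x ^ (-(1 / D)) ≤ (m : ℝ) ^ (-(1 / D)) :=
      Real.rpow_le_rpow_of_nonpos hm0' hmx (neg_nonpos.mpr (by positivity))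
    have hxval : c * x ^ (-(1 / D)) = 2 * ε := by
      rw [hxdef, rpow_rpow (div_pos hc h2e).le (show D * (-(1 / D)) = -1 by field_simp),
        Real.rpow_neg_one]
      field_simp
    calc 2 * ε = c * x ^ (-(1 / D)) := hxval.symm
      _ ≤ c * (m : ℝ) ^ (-(1 / D)) := mul_le_mul_of_nonneg_left hmono hc.le
      _ = c * ((n : ℝ) + 1) ^ (-(1 / D)) := by rw [hcast]
      _ ≤ ℓ n := hbn
  have hV := vol_ge hpos hant hsum hε n hℓn
  have hεD : (0:ℝ) < ε ^ (1 - D) := Real.rpow_pos_of_pos hε _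
  rw [le_div_iff₀ hεD]
  have hkey : (c / 2) ^ D * ε ^ (1 - D) = x * ε := by
    have h1 : (c / 2) ^ D = x * ε ^ D := by
      rw [hxdef, ← Real.mul_rpow (div_pos hc h2e).le hε.le]
      congr 1
      field_simp
    rw [h1, mul_assoc, ← Real.rpow_add hε]
    norm_num
  rw [hkey]
  have hc1 : ((n : ℝ) + 1) = (m : ℝ) := by rw [← hn]; push_cast; ring
  rw [hc1] at hV
  nlinarith [hV]

set_option maxHeartbeats 1600000 in
private lemma vol_small {ℓ : ℕ → ℝ} {D C : ℝ} (hD0 : 0 < D) (hD1 : D < 1) (hC : 0 < C)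
    (hpos : ∀ j, 0 < ℓ j) (hant : Antitone ℓ) (hsum : Summable ℓ)
    (hb : ∀ j : ℕ, ℓ j ≤ C * ((j : ℝ) + 1) ^ (-(1 / D))) (j : ℕ) :
    ∃ ε : ℝ, 0 < ε ∧ 2 * ε ≤ C * ((j : ℝ) + 1) ^ (-(1 / D)) ∧
      stringVol ℓ ε / ε ^ (1 - D) ≤
        2 ^ (1 - D) * C ^ (D / 2) * (ℓ j * ((j : ℝ) + 1) ^ (1 / D)) ^ (D / 2) +
          2 ^ (1 - D) * ((2 + 1 / (1 / D - 1)) * C ^ D) *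
            ((ℓ j * ((j : ℝ) + 1) ^ (1 / D)) / C) ^ ((1 - D) / 2) := by
  have hp : 1 < 1 / D := by rw [lt_div_iff₀ hD0]; linarith
  have hj1 : (0:ℝ) < (j : ℝ) + 1 := by positivity
  set s : ℝ := ((j : ℝ) + 1) ^ (-(1 / D)) with hsdef
  have hs0 : 0 < s := Real.rpow_pos_of_pos hj1 _
  set t : ℝ := ℓ j with htdef
  have ht : 0 < t := hpos j
  have hts : t ≤ C * s := hb j
  set δ : ℝ := t / s with hδdef
  have hδ0 : 0 < δ := div_pos ht hs0
  have hSs : ((j : ℝ) + 1) ^ (1 / D) = s⁻¹ := by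
    rw [hsdef, Real.rpow_neg hj1.le, inv_inv]
  have hδeq : t * ((j : ℝ) + 1) ^ (1 / D) = δ := by
    rw [hSs, hδdef, div_eq_mul_inv]
  have hsD : s ^ D = ((j : ℝ) + 1)⁻¹ := by
    rw [hsdef, rpow_rpow hj1.le (show -(1 / D) * D = -1 by field_simp), Real.rpow_neg_one]
  set w : ℝ := t * (C * s) with hwdef
  have hw0 : 0 < w := by positivity
  refine ⟨Real.sqrt w / 2, by positivity, ?_, ?_⟩
  · rw [show 2 * (Real.sqrt w / 2) = Real.sqrt w by ring]
    calc Real.sqrt w ≤ Real.sqrt ((C * s) * (C * s)) := by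
          apply Real.sqrt_le_sqrt
          rw [hwdef]; nlinarith
      _ = C * s := Real.sqrt_mul_self (by positivity)
  · set ε : ℝ := Real.sqrt w / 2 with hεdef
    have hε : 0 < ε := by rw [hεdef]; positivity
    have h2ε : 2 * ε = w ^ ((1:ℝ) / 2) := by
      rw [hεdef, Real.sqrt_eq_rpow]; ring
    have h2e : (0:ℝ) < 2 * ε := by linarith
    set y : ℝ := (C / t) ^ D with hydef
    have hy0 : 0 < y := Real.rpow_pos_of_pos (div_pos hC ht) D
    have hy1 : (j : ℝ) + 1 ≤ y := by
      have h1 : s⁻¹ ≤ C / t := by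
        rw [inv_eq_one_div, div_le_div_iff₀ hs0 ht]
        nlinarith
      calc (j : ℝ) + 1 = (s⁻¹) ^ D := by
            rw [← hSs, rpow_rpow hj1.le (show 1 / D * D = 1 by field_simp), Real.rpow_one]
        _ ≤ (C / t) ^ D := Real.rpow_le_rpow (by positivity) h1 hD0.le
    set m := ⌈y⌉₊ with hmdef
    have hmy : y ≤ (m : ℝ) := Nat.le_ceil y
    have hym : (m : ℝ) ≤ 2 * y := by
      have h2 : (m : ℝ) < y + 1 := by rw [hmdef]; exact Nat.ceil_lt_add_one hy0.le
      linarith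
    have hjm : j + 1 ≤ m := by
      have h3 : (j:ℝ) < y := by linarith
      have h4 := Nat.lt_ceil.mpr h3
      omega
    have hm1 : 1 ≤ m := by omega
    set k := m - j with hkdef
    have hjk : j + k = m := by omega
    have hq1 : (0:ℝ) < 1 / D - 1 := by linarith
    -- tail bound
    have hTail : ∑' i, min (ℓ (i + j)) (2 * ε) ≤ (2 + 1 / (1 / D - 1)) * (C ^ D * t ^ (1 - D)) := by
      have hsummin : Summable (fun i => min (ℓ (i + j)) (2 * ε)) :=
        (summable_nat_add_iff j).mpr (summable_min hpos hsum h2e.le)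
      have hsumg : Summable (fun i : ℕ => min t (C * ((i : ℝ) + j + 1) ^ (-(1 / D)))) :=
        Summable.of_nonneg_of_le (fun i => le_min ht.le (by positivity))
          (fun i => min_le_right _ _) ((summable_shift'' hp j).mul_left C)
      have hg : ∀ i : ℕ, min (ℓ (i + j)) (2 * ε) ≤ min t (C * ((i : ℝ) + j + 1) ^ (-(1 / D))) := by
        intro i
        refine le_trans (min_le_left _ _) (le_min (hant (Nat.le_add_left j i)) ?_)
        refine le_trans (hb (i + j)) (le_of_eq ?_)
        congr 2; push_cast; ring
      have hcast : ∀ i : ℕ, ((i + k : ℕ) : ℝ) + j + 1 = (i : ℝ) + m + 1 := by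
        intro i; push_cast [← hjk]; ring
      have hpart2 : ∑' i : ℕ, min t (C * (((i + k : ℕ) : ℝ) + j + 1) ^ (-(1 / D)))
          ≤ C * ((m : ℝ) ^ (1 - 1 / D) / (1 / D - 1)) := by
        calc ∑' i : ℕ, min t (C * (((i + k : ℕ) : ℝ) + j + 1) ^ (-(1 / D)))
            ≤ ∑' i : ℕ, C * ((i : ℝ) + m + 1) ^ (-(1 / D)) := by
              refine Summable.tsum_le_tsum (fun i => ?_) ((summable_nat_add_iff k).mpr hsumg)
                ((summable_shift'' hp m).mul_left C)
              rw [hcast i]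
              exact min_le_right _ _
          _ = C * ∑' i : ℕ, ((i : ℝ) + m + 1) ^ (-(1 / D)) := tsum_mul_left
          _ ≤ C * ((m : ℝ) ^ (1 - 1 / D) / (1 / D - 1)) :=
              mul_le_mul_of_nonneg_left (tail_sum_le hp m hm1) hC.le
      have hpart1 : ∑ i ∈ Finset.range k, min t (C * ((i : ℝ) + j + 1) ^ (-(1 / D)))
          ≤ (k : ℝ) * t := by
        calc ∑ i ∈ Finset.range k, min t (C * ((i : ℝ) + j + 1) ^ (-(1 / D)))
            ≤ ∑ _i ∈ Finset.range k, t := Finset.sum_le_sum fun i _ => min_le_left _ _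
          _ = (k : ℝ) * t := by rw [Finset.sum_const, Finset.card_range, nsmul_eq_mul]
      have hsplit : ∑' i : ℕ, min t (C * ((i : ℝ) + j + 1) ^ (-(1 / D)))
          ≤ (k : ℝ) * t + C * ((m : ℝ) ^ (1 - 1 / D) / (1 / D - 1)) := by
        rw [← Summable.sum_add_tsum_nat_add k hsumg]
        exact add_le_add hpart1 hpart2
      -- rpow computations
      have c1 : y * t = C ^ D * t ^ (1 - D) := by
        rw [hydef, Real.div_rpow hC.le ht.le, Real.rpow_sub ht, Real.rpow_one]
        have : t ^ D ≠ 0 := (Real.rpow_pos_of_pos ht D).ne'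
        field_simp
      have c2 : C * y ^ (1 - 1 / D) = C ^ D * t ^ (1 - D) := by
        rw [hydef, rpow_rpow (div_pos hC ht).le (show D * (1 - 1 / D) = D - 1 by field_simp),
          Real.div_rpow hC.le ht.le]
        have hne2 : t ^ (D - 1) ≠ 0 := (Real.rpow_pos_of_pos ht _).ne'
        have e1 : C * C ^ (D - 1) = C ^ D := by
          nth_rewrite 1 [← Real.rpow_one C]
          rw [← Real.rpow_add hC]; congr 1; ring
        have e2 : t ^ (1 - D) * t ^ (D - 1) = 1 := by
          rw [← Real.rpow_add ht]; norm_num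
        rw [← mul_div_assoc, div_eq_iff hne2, e1, mul_assoc, e2, mul_one]
      have hkm : (k : ℝ) ≤ (m : ℝ) := by exact_mod_cast Nat.sub_le m j
      have hmp : (m : ℝ) ^ (1 - 1 / D) ≤ y ^ (1 - 1 / D) :=
        Real.rpow_le_rpow_of_nonpos hy0 hmy (by linarith)
      have hA : (0:ℝ) < C ^ D * t ^ (1 - D) := by positivity
      have h5 : (k : ℝ) * t ≤ 2 * (C ^ D * t ^ (1 - D)) := by nlinarith
      have h6 : C * ((m : ℝ) ^ (1 - 1 / D) / (1 / D - 1)) ≤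
          (C ^ D * t ^ (1 - D)) * (1 / (1 / D - 1)) := by
        calc C * ((m : ℝ) ^ (1 - 1 / D) / (1 / D - 1))
            = (C * (m : ℝ) ^ (1 - 1 / D)) / (1 / D - 1) := by ring
          _ ≤ (C * y ^ (1 - 1 / D)) / (1 / D - 1) := by gcongr
          _ = (C ^ D * t ^ (1 - D)) * (1 / (1 / D - 1)) := by rw [c2]; ring
      calc ∑' i, min (ℓ (i + j)) (2 * ε)
          ≤ ∑' i : ℕ, min t (C * ((i : ℝ) + j + 1) ^ (-(1 / D))) :=
            Summable.tsum_le_tsum hg hsummin hsumg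
        _ ≤ (k : ℝ) * t + C * ((m : ℝ) ^ (1 - 1 / D) / (1 / D - 1)) := hsplit
        _ ≤ (2 + 1 / (1 / D - 1)) * (C ^ D * t ^ (1 - D)) := by nlinarith
    have hV := vol_le hpos hsum hε j hTail
    -- final division
    have hεD : (0:ℝ) < ε ^ (1 - D) := Real.rpow_pos_of_pos hε _
    have hsh0 : (0:ℝ) < s ^ (D / 2) := Real.rpow_pos_of_pos hs0 _
    have hjs : ((j : ℝ) + 1) * s ^ (D / 2) = (s ^ (D / 2))⁻¹ := by
      apply eq_inv_of_mul_eq_one_left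
      rw [mul_assoc, ← Real.rpow_add hs0, show D / 2 + D / 2 = D by ring, hsD]
      field_simp
    have hεD2 : ε ^ D = w ^ (D / 2) / 2 ^ D := by
      rw [hεdef, Real.div_rpow (Real.sqrt_nonneg w) (by norm_num : (0:ℝ) ≤ 2),
        Real.sqrt_eq_rpow, rpow_rpow hw0.le (show 1 / 2 * D = D / 2 by ring)]
    have h2D : (2:ℝ) ^ (1 - D) = 2 / 2 ^ D := by
      rw [Real.rpow_sub two_pos, Real.rpow_one]
    have hw_split : w ^ (D / 2) = t ^ (D / 2) * (C ^ (D / 2) * s ^ (D / 2)) := by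
      rw [hwdef, Real.mul_rpow ht.le (by positivity), Real.mul_rpow hC.le hs0.le]
    have hδ_half : δ ^ (D / 2) = t ^ (D / 2) * (s ^ (D / 2))⁻¹ := by
      rw [hδdef, Real.div_rpow ht.le hs0.le, div_eq_mul_inv]
    have hterm1 : ((j : ℝ) + 1) * (2 * ε ^ D) = 2 ^ (1 - D) * C ^ (D / 2) * δ ^ (D / 2) := by
      rw [hεD2, h2D, hw_split, hδ_half]
      linear_combination (2 / 2 ^ D) * C ^ (D / 2) * t ^ (D / 2) * hjs
    have hterm2 : t ^ (1 - D) / ε ^ (1 - D) = 2 ^ (1 - D) * (δ / C) ^ ((1 - D) / 2) := by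
      have et : t ^ (1 - D) / ε ^ (1 - D) = (t / ε) ^ (1 - D) :=
        (Real.div_rpow ht.le hε.le (1 - D)).symm
      have hδC : (0:ℝ) ≤ δ / C := by positivity
      have hq : (δ / C) ^ ((1:ℝ) / 2) * w ^ ((1:ℝ) / 2) = t := by
        rw [← Real.mul_rpow hδC hw0.le]
        have : δ / C * w = t * t := by
          rw [hδdef, hwdef]; field_simp
        rw [this, Real.mul_rpow ht.le ht.le, ← Real.rpow_add ht]
        norm_num
      have hw12 : (0:ℝ) < w ^ ((1:ℝ) / 2) := Real.rpow_pos_of_pos hw0 _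
      have htε : t / ε = 2 * (δ / C) ^ ((1:ℝ) / 2) := by
        rw [hεdef, Real.sqrt_eq_rpow, div_div_eq_mul_div]
        rw [div_eq_iff hw12.ne']
        linear_combination (-2) * hq
      rw [et, htε, Real.mul_rpow (by norm_num) (by positivity),
        rpow_rpow hδC (show 1 / 2 * (1 - D) = (1 - D) / 2 by ring)]
    rw [hδeq]
    have hstep : stringVol ℓ ε / ε ^ (1 - D) ≤
        ((j : ℝ) * (2 * ε) + (2 + 1 / (1 / D - 1)) * (C ^ D * t ^ (1 - D))) / ε ^ (1 - D) := by
      gcongr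
    have hsplit2 : ((j : ℝ) * (2 * ε) + (2 + 1 / (1 / D - 1)) * (C ^ D * t ^ (1 - D))) / ε ^ (1 - D)
        = (j : ℝ) * (2 * ε) / ε ^ (1 - D)
          + (2 + 1 / (1 / D - 1)) * C ^ D * (t ^ (1 - D) / ε ^ (1 - D)) := by ring
    have he1 : (2 * ε) / ε ^ (1 - D) = 2 * ε ^ D := by
      rw [show (2 * ε) / ε ^ (1 - D) = 2 * (ε ^ (1:ℝ) / ε ^ (1 - D)) by rw [Real.rpow_one]; ring,
        ← Real.rpow_sub hε, show (1:ℝ) - (1 - D) = D by ring]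
    have hb1 : (j : ℝ) * (2 * ε) / ε ^ (1 - D) ≤ 2 ^ (1 - D) * C ^ (D / 2) * δ ^ (D / 2) := by
      rw [show (j : ℝ) * (2 * ε) / ε ^ (1 - D) = (j : ℝ) * ((2 * ε) / ε ^ (1 - D)) by ring, he1]
      rw [← hterm1]
      have hεDpos : (0:ℝ) < ε ^ D := Real.rpow_pos_of_pos hε D
      nlinarith
    calc stringVol ℓ ε / ε ^ (1 - D)
        ≤ ((j : ℝ) * (2 * ε) + (2 + 1 / (1 / D - 1)) * (C ^ D * t ^ (1 - D))) / ε ^ (1 - D) :=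
          hstep
      _ = (j : ℝ) * (2 * ε) / ε ^ (1 - D)
          + (2 + 1 / (1 / D - 1)) * C ^ D * (t ^ (1 - D) / ε ^ (1 - D)) := hsplit2
      _ ≤ 2 ^ (1 - D) * C ^ (D / 2) * δ ^ (D / 2)
          + (2 + 1 / (1 / D - 1)) * C ^ D * (2 ^ (1 - D) * (δ / C) ^ ((1 - D) / 2)) := by
          rw [hterm2]
          linarith
      _ = 2 ^ (1 - D) * C ^ (D / 2) * δ ^ (D / 2)
          + 2 ^ (1 - D) * ((2 + 1 / (1 / D - 1)) * C ^ D) * (δ / C) ^ ((1 - D) / 2) := by ring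

private lemma ell_le {D t C jr : ℝ} (hD0 : 0 < D) (hj : 0 ≤ jr)
    (h : t * (jr + 1) ^ (1 / D) ≤ C) : t ≤ C * (jr + 1) ^ (-(1 / D)) := by
  have hid : (jr + 1) ^ (1 / D) * (jr + 1) ^ (-(1 / D)) = 1 := by
    rw [← Real.rpow_add (by linarith)]; norm_num
  calc t = (t * (jr + 1) ^ (1 / D)) * (jr + 1) ^ (-(1 / D)) := by
        rw [mul_assoc, hid, mul_one]
    _ ≤ C * (jr + 1) ^ (-(1 / D)) :=
        mul_le_mul_of_nonneg_right h (Real.rpow_nonneg (by linarith) _)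

private lemma le_ell {D t c jr : ℝ} (hD0 : 0 < D) (hj : 0 ≤ jr)
    (h : c ≤ t * (jr + 1) ^ (1 / D)) : c * (jr + 1) ^ (-(1 / D)) ≤ t := by
  have hid : (jr + 1) ^ (1 / D) * (jr + 1) ^ (-(1 / D)) = 1 := by
    rw [← Real.rpow_add (by linarith)]; norm_num
  calc c * (jr + 1) ^ (-(1 / D)) ≤ (t * (jr + 1) ^ (1 / D)) * (jr + 1) ^ (-(1 / D)) :=
        mul_le_mul_of_nonneg_right h (Real.rpow_nonneg (by linarith) _)
    _ = t := by rw [mul_assoc, hid, mul_one]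

private lemma global_alpha_bound {ℓ : ℕ → ℝ} (hpos : ∀ j, 0 < ℓ j) (hant : Antitone ℓ)
    {D A : ℝ} (hD0 : 0 < D) (J : ℕ) (hJ : ∀ j, J ≤ j → ℓ j * ((j : ℝ) + 1) ^ (1 / D) ≤ A) :
    ∃ C : ℝ, 0 < C ∧ ∀ j : ℕ, ℓ j ≤ C * ((j : ℝ) + 1) ^ (-(1 / D)) := by
  set B := max A (ℓ 0 * ((J : ℝ) + 1) ^ (1 / D)) with hB
  refine ⟨B + 1, ?_, fun j => ?_⟩
  · have h0 : 0 < ℓ 0 * ((J : ℝ) + 1) ^ (1 / D) := by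
      have := hpos 0; positivity
    have := le_max_right A (ℓ 0 * ((J : ℝ) + 1) ^ (1 / D))
    linarith
  · apply ell_le hD0 (Nat.cast_nonneg j)
    rcases le_or_gt J j with hj | hj
    · have h1 := hJ j hj
      have := le_max_left A (ℓ 0 * ((J : ℝ) + 1) ^ (1 / D))
      linarith
    · have h1 : ℓ j ≤ ℓ 0 := hant (Nat.zero_le j)
      have h2 : ((j : ℝ) + 1) ^ (1 / D) ≤ ((J : ℝ) + 1) ^ (1 / D) := by
        apply Real.rpow_le_rpow (by positivity) _ (by positivity)
        have : (j : ℝ) ≤ (J : ℝ) := by exact_mod_cast hj.le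
        linarith
      have h3 : ℓ j * ((j : ℝ) + 1) ^ (1 / D) ≤ ℓ 0 * ((J : ℝ) + 1) ^ (1 / D) :=
        mul_le_mul h1 h2 (by positivity) (hpos 0).le
      have := le_max_right A (ℓ 0 * ((J : ℝ) + 1) ^ (1 / D))
      linarith

private lemma alpha_bound {D Cr t jr : ℝ} (hD0 : 0 < D) (hD1 : D < 1) (hC : 0 < Cr)
    (ht : 0 < t) (hj : 0 ≤ jr) (h : (jr + 1) * t ≤ Cr * (t / 2) ^ (1 - D)) :
    t * (jr + 1) ^ (1 / D) ≤ (2 ^ (D - 1) * Cr) ^ (1 / D) := by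
  have h1 : (t / 2) ^ (1 - D) = t ^ (1 - D) * 2 ^ (D - 1) := by
    rw [Real.div_rpow ht.le (by norm_num), show (D - 1) = -(1 - D) by ring,
      Real.rpow_neg (by norm_num), div_eq_mul_inv]
  have htd : t ^ D * t ^ (1 - D) = t := by
    rw [← Real.rpow_add ht]; norm_num
  have ht1D : (0:ℝ) < t ^ (1 - D) := Real.rpow_pos_of_pos ht _
  have h2 : (jr + 1) * t ^ D ≤ 2 ^ (D - 1) * Cr := by
    have h3 : ((jr + 1) * t ^ D) * t ^ (1 - D) ≤ (2 ^ (D - 1) * Cr) * t ^ (1 - D) := by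
      calc ((jr + 1) * t ^ D) * t ^ (1 - D) = (jr + 1) * t := by rw [mul_assoc, htd]
        _ ≤ Cr * (t / 2) ^ (1 - D) := h
        _ = (2 ^ (D - 1) * Cr) * t ^ (1 - D) := by rw [h1]; ring
    exact le_of_mul_le_mul_right h3 ht1D
  have h3 : (t * (jr + 1) ^ (1 / D)) ^ D = t ^ D * (jr + 1) := by
    rw [Real.mul_rpow ht.le (by positivity),
      rpow_rpow (by positivity) (show 1 / D * D = 1 by field_simp), Real.rpow_one]
  have h4 : (t * (jr + 1) ^ (1 / D)) ^ D ≤ 2 ^ (D - 1) * Cr := by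
    rw [h3]; nlinarith
  calc t * (jr + 1) ^ (1 / D)
      = ((t * (jr + 1) ^ (1 / D)) ^ D) ^ (1 / D) := by
        rw [rpow_rpow (by positivity) (show D * (1 / D) = 1 by field_simp), Real.rpow_one]
    _ ≤ (2 ^ (D - 1) * Cr) ^ (1 / D) :=
        Real.rpow_le_rpow (by positivity) h4 (by positivity)

private lemma stringVol_nonneg {ℓ : ℕ → ℝ} (hpos : ∀ j, 0 < ℓ j) {ε : ℝ} (hε : 0 < ε) :
    0 ≤ stringVol ℓ ε :=
  tsum_nonneg fun i => le_min (hpos i).le (by linarith)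

private lemma upper_bound_of_content {ℓ : ℕ → ℝ} {D : ℝ} (hpos : ∀ j, 0 < ℓ j)
    (h : upperContent ℓ D < ⊤) :
    ∃ c : ℝ, 0 < c ∧ ∃ ε₀ : ℝ, 0 < ε₀ ∧ ∀ ε : ℝ, 0 < ε → ε < ε₀ →
      stringVol ℓ ε ≤ c * ε ^ (1 - D) := by
  have hlt : upperContent ℓ D < upperContent ℓ D + 1 := ENNReal.lt_add_right h.ne one_ne_zero
  set B := upperContent ℓ D + 1 with hBdef
  have hBtop : B ≠ ⊤ := ENNReal.add_ne_top.mpr ⟨h.ne, ENNReal.one_ne_top⟩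
  rw [upperContent] at hlt
  have hev := eventually_lt_of_limsup_lt hlt
  rw [(nhdsGT_basis (0:ℝ)).eventually_iff] at hev
  obtain ⟨ε₀, hε₀, hin⟩ := hev
  refine ⟨B.toReal + 1, by positivity, ε₀, hε₀, fun ε hε hεlt => ?_⟩
  have h1 := hin (show ε ∈ Set.Ioo 0 ε₀ from ⟨hε, hεlt⟩)
  have hεp : (0:ℝ) < ε ^ (1 - D) := Real.rpow_pos_of_pos hε _
  have hnn : 0 ≤ stringVol ℓ ε / ε ^ (1 - D) :=
    div_nonneg (stringVol_nonneg hpos hε) hεp.le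
  have h2 : stringVol ℓ ε / ε ^ (1 - D) < B.toReal :=
    (ENNReal.ofReal_lt_iff_lt_toReal hnn hBtop).mp h1
  rw [div_lt_iff₀ hεp] at h2
  nlinarith


/-- (Characterization of Minkowski nondegeneracy, Lapidus–Pomerance)
A fractal string of dimension `D ∈ (0,1)` is Minkowski nondegenerate iff
`0 < α_* ≤ α^* < ∞`, where `α_*`, `α^*` are the lower and upper limits of
`ℓ_j j^{1/D}` as `j → ∞`. -/
theorem minkNondegenerate_iff (ℓ : ℕ → ℝ) (h : IsFractalString ℓ) (D : ℝ)
    (hD : D ∈ Set.Ioo (0:ℝ) 1) (hdim : minkDim ℓ = D) :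
    (0 < lowerContent ℓ D ∧ upperContent ℓ D < ⊤) ↔
    (0 < Filter.liminf
        (fun j : ℕ => ENNReal.ofReal (ℓ j * ((j : ℝ) + 1) ^ (1 / D))) atTop ∧
      Filter.limsup
        (fun j : ℕ => ENNReal.ofReal (ℓ j * ((j : ℝ) + 1) ^ (1 / D))) atTop < ⊤) := by
  obtain ⟨hD0, hD1⟩ := hD
  obtain ⟨hpos, hant, hsum⟩ := h
  have hq1 : (0:ℝ) < 1 / D - 1 := by
    rw [lt_sub_iff_add_lt, zero_add, lt_div_iff₀ hD0]; linarith
  constructor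
  · rintro ⟨hM1, hM2⟩
    obtain ⟨Cr, hCr, ε₀, hε₀, hVb⟩ := upper_bound_of_content hpos hM2
    have hto : Tendsto ℓ atTop (𝓝 0) := hsum.tendsto_atTop_zero
    obtain ⟨J, hJ⟩ := eventually_atTop.mp
      (hto.eventually_lt_const (show (0:ℝ) < 2 * ε₀ by linarith))
    have halpha : ∀ j, J ≤ j →
        ℓ j * ((j:ℝ)+1)^(1/D) ≤ (2^(D-1) * Cr)^(1/D) := by
      intro j hj
      have hℓj := hpos j
      have hε : 0 < ℓ j / 2 := by linarith
      have hεlt : ℓ j / 2 < ε₀ := by have := hJ j hj; linarith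
      have h2ε : 2 * (ℓ j / 2) = ℓ j := by ring
      have hge := vol_ge hpos hant hsum hε j (by rw [h2ε])
      have hle := hVb (ℓ j / 2) hε hεlt
      rw [h2ε] at hge
      exact alpha_bound hD0 hD1 hCr hℓj (Nat.cast_nonneg j) (le_trans hge hle)
    constructor
    · by_contra hcon
      push_neg at hcon
      have hlim0 : Filter.liminf
          (fun j : ℕ => ENNReal.ofReal (ℓ j * ((j : ℝ) + 1) ^ (1 / D))) atTop = 0 :=
        le_antisymm hcon zero_le
      obtain ⟨Cg, hCg, hbg⟩ := global_alpha_bound hpos hant hD0 J halpha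
      set G : ℝ → ℝ := fun δ => 2^(1-D) * Cg^(D/2) * δ^(D/2)
        + 2^(1-D) * ((2 + 1/(1/D-1)) * Cg^D) * (δ/Cg)^((1-D)/2) with hGdef
      have hkey : ∀ n : ℕ, lowerContent ℓ D ≤ ENNReal.ofReal (G (1/((n:ℝ)+1))) := by
        intro n
        rw [lowerContent]
        apply liminf_le_of_frequently_le'
        rw [(nhdsGT_basis (0:ℝ)).frequently_iff]
        intro ε₀' hε₀'
        have htN : Tendsto (fun N : ℕ => Cg * ((N:ℝ)+1)^(-(1/D))) atTop (𝓝 0) := by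
          have h1 : Tendsto (fun N : ℕ => ((N:ℝ)+1)) atTop atTop :=
            tendsto_atTop_add_const_right _ 1 tendsto_natCast_atTop_atTop
          have h2 := (tendsto_rpow_neg_atTop (one_div_pos.mpr hD0)).comp h1
          have h3 := h2.const_mul Cg
          simpa using h3
        obtain ⟨N, hN⟩ := eventually_atTop.mp
          (htN.eventually_lt_const (show (0:ℝ) < 2*ε₀' by linarith))
        have hδpos : (0:ℝ) < 1/((n:ℝ)+1) := by positivity
        have hfreq : ∃ᶠ j in atTop,
            ENNReal.ofReal (ℓ j * ((j:ℝ)+1)^(1/D)) < ENNReal.ofReal (1/((n:ℝ)+1)) :=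
          frequently_lt_of_liminf_lt (by isBoundedDefault)
            (by rw [hlim0]; exact ENNReal.ofReal_pos.mpr hδpos)
        obtain ⟨j, hjN, hjsmall⟩ := (frequently_atTop.mp hfreq) N
        have hasmall : ℓ j * ((j:ℝ)+1)^(1/D) < 1/((n:ℝ)+1) :=
          (ENNReal.ofReal_lt_ofReal_iff hδpos).mp hjsmall
        obtain ⟨ε, hε, hεle, hεF⟩ := vol_small hD0 hD1 hCg hpos hant hsum hbg j
        refine ⟨ε, ⟨hε, ?_⟩, ?_⟩
        · have hsle : ((j:ℝ)+1)^(-(1/D)) ≤ ((N:ℝ)+1)^(-(1/D)) := by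
            apply Real.rpow_le_rpow_of_nonpos (by positivity) _
              (neg_nonpos.mpr (one_div_pos.mpr hD0).le)
            have : (N:ℝ) ≤ (j:ℝ) := by exact_mod_cast hjN
            linarith
          have h2 : Cg * ((j:ℝ)+1)^(-(1/D)) < 2*ε₀' :=
            lt_of_le_of_lt (mul_le_mul_of_nonneg_left hsle hCg.le) (hN N le_rfl)
          linarith
        · apply ENNReal.ofReal_le_ofReal
          refine le_trans hεF ?_
          have ha0 : 0 ≤ ℓ j * ((j:ℝ)+1)^(1/D) :=
            mul_nonneg (hpos j).le (Real.rpow_nonneg (by positivity) _)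
          have hmono1 : (ℓ j * ((j:ℝ)+1)^(1/D))^(D/2) ≤ (1/((n:ℝ)+1))^(D/2) :=
            Real.rpow_le_rpow ha0 hasmall.le (by linarith)
          have hmono2 : ((ℓ j * ((j:ℝ)+1)^(1/D))/Cg)^((1-D)/2)
              ≤ ((1/((n:ℝ)+1))/Cg)^((1-D)/2) := by
            apply Real.rpow_le_rpow (div_nonneg ha0 hCg.le) _ (by linarith)
            gcongr <;> exact hasmall.le
          have hco1 : (0:ℝ) ≤ 2^(1-D) * Cg^(D/2) :=
            mul_nonneg (Real.rpow_nonneg (by norm_num) _) (Real.rpow_nonneg hCg.le _)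
          have hco2 : (0:ℝ) ≤ 2^(1-D) * ((2 + 1/(1/D-1)) * Cg^D) := by
            apply mul_nonneg (Real.rpow_nonneg (by norm_num) _)
            apply mul_nonneg _ (Real.rpow_nonneg hCg.le _)
            have := one_div_pos.mpr hq1
            linarith
          simp only [hGdef]
          exact add_le_add (mul_le_mul_of_nonneg_left hmono1 hco1)
            (mul_le_mul_of_nonneg_left hmono2 hco2)
      have hG0 : G 0 = 0 := by
        have e1 : (0:ℝ)^(D/2) = 0 := Real.zero_rpow (div_pos hD0 two_pos).ne'
        have e2 : ((0:ℝ)/Cg)^((1-D)/2) = 0 := by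
          rw [zero_div]
          exact Real.zero_rpow (show (0:ℝ) < (1-D)/2 by linarith).ne'
        simp only [hGdef, e1, e2, mul_zero, add_zero]
      have hcont : ContinuousAt G 0 := by
        rw [hGdef]
        apply ContinuousAt.add
        · exact continuousAt_const.mul
            (Real.continuousAt_rpow_const 0 (D/2) (Or.inr (by linarith)))
        · apply continuousAt_const.mul
          have hc : ContinuousAt (fun δ:ℝ => δ/Cg) 0 := (continuous_id.div_const Cg).continuousAt
          exact hc.rpow_const (Or.inr (by linarith))
      have htend : Tendsto (fun n : ℕ => ENNReal.ofReal (G (1/((n:ℝ)+1)))) atTop (𝓝 0) := by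
        have h5 := ENNReal.tendsto_ofReal
          ((hcont.tendsto.comp tendsto_one_div_add_atTop_nhds_zero_nat))
        rw [hG0, ENNReal.ofReal_zero] at h5
        exact h5
      have hle0 : lowerContent ℓ D ≤ 0 := ge_of_tendsto htend (Eventually.of_forall hkey)
      rw [nonpos_iff_eq_zero] at hle0
      rw [hle0] at hM1
      exact lt_irrefl _ hM1
    · have hlimsup : Filter.limsup
          (fun j : ℕ => ENNReal.ofReal (ℓ j * ((j:ℝ)+1)^(1/D))) atTop
          ≤ ENNReal.ofReal ((2^(D-1) * Cr)^(1/D)) := by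
        exact limsup_le_of_le (by isBoundedDefault) (eventually_atTop.mpr
          ⟨J, fun j hj => ENNReal.ofReal_le_ofReal (halpha j hj)⟩)
      exact lt_of_le_of_lt hlimsup ENNReal.ofReal_lt_top
  · rintro ⟨hα1, hα2⟩
    set a : ℕ → ENNReal := fun j : ℕ => ENNReal.ofReal (ℓ j * ((j : ℝ) + 1) ^ (1 / D)) with hadef
    have hBtop : Filter.limsup a atTop + 1 ≠ ⊤ :=
      ENNReal.add_ne_top.mpr ⟨hα2.ne, ENNReal.one_ne_top⟩
    have hlt2 : Filter.limsup a atTop < Filter.limsup a atTop + 1 :=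
      ENNReal.lt_add_right hα2.ne one_ne_zero
    obtain ⟨J, hJ⟩ := eventually_atTop.mp (eventually_lt_of_limsup_lt hlt2)
    have hJr : ∀ j, J ≤ j → ℓ j * ((j:ℝ)+1)^(1/D) ≤ (Filter.limsup a atTop + 1).toReal := by
      intro j hj
      have h1 := hJ j hj
      have h0 : 0 ≤ ℓ j * ((j:ℝ)+1)^(1/D) :=
        mul_nonneg (hpos j).le (Real.rpow_nonneg (by positivity) _)
      exact ((ENNReal.ofReal_lt_iff_lt_toReal h0 hBtop).mp h1).le
    obtain ⟨Cg, hCg, hbg⟩ := global_alpha_bound hpos hant hD0 J hJr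
    constructor
    · -- lower content positive
      have hr0 : 0 < min (Filter.liminf a atTop) 1 := lt_min hα1 zero_lt_one
      have hrne : min (Filter.liminf a atTop) 1 ≠ ⊤ :=
        ne_top_of_le_ne_top ENNReal.one_ne_top (min_le_right _ _)
      have hhalf : min (Filter.liminf a atTop) 1 / 2 < Filter.liminf a atTop :=
        lt_of_lt_of_le (ENNReal.half_lt_self hr0.ne' hrne) (min_le_left _ _)
      obtain ⟨J₂, hJ₂⟩ := eventually_atTop.mp (eventually_lt_of_lt_liminf hhalf)
      set cr := (min (Filter.liminf a atTop) 1 / 2).toReal with hcrdef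
      have hcrne : min (Filter.liminf a atTop) 1 / 2 ≠ ⊤ :=
        ne_top_of_le_ne_top hrne ENNReal.half_le_self
      have hcr0 : 0 < cr := ENNReal.toReal_pos (ENNReal.half_pos hr0.ne').ne' hcrne
      have hbl : ∀ j, J₂ ≤ j → cr * ((j:ℝ)+1)^(-(1/D)) ≤ ℓ j := by
        intro j hj
        have h1 := hJ₂ j hj
        have h2 : cr < ℓ j * ((j:ℝ)+1)^(1/D) := by
          rw [hcrdef]
          exact (ENNReal.lt_ofReal_iff_toReal_lt hcrne).mp h1
        exact le_ell hD0 (Nat.cast_nonneg j) h2.le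
      set ε₁ := (cr/2) * ((J₂:ℝ)+2)^(-(1/D)) with hε₁def
      have hJ2p : (0:ℝ) < (J₂:ℝ)+2 := by positivity
      have hε₁ : 0 < ε₁ := by
        apply mul_pos (by linarith) (Real.rpow_pos_of_pos hJ2p _)
      have hlow : ENNReal.ofReal ((cr/2)^D) ≤ lowerContent ℓ D := by
        rw [lowerContent]
        refine le_liminf_of_le (by isBoundedDefault) ?_
        rw [(nhdsGT_basis (0:ℝ)).eventually_iff]
        refine ⟨ε₁, hε₁, fun ε hεio => ?_⟩
        obtain ⟨hε, hεlt⟩ := hεio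
        apply ENNReal.ofReal_le_ofReal
        apply vol_lower hD0 hD1 hcr0 hpos hant hsum J₂ hbl hε
        have hid : ((J₂:ℝ)+2)^(1/D) * ((J₂:ℝ)+2)^(-(1/D)) = 1 := by
          rw [← Real.rpow_add hJ2p]; norm_num
        have hby : ((J₂:ℝ)+2)^(1/D) ≤ cr/(2*ε) := by
          rw [le_div_iff₀ (by linarith)]
          calc ((J₂:ℝ)+2)^(1/D) * (2*ε) ≤ ((J₂:ℝ)+2)^(1/D) * (2*ε₁) := by
                apply mul_le_mul_of_nonneg_left (by linarith)
                  (Real.rpow_nonneg hJ2p.le _)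
            _ = cr * (((J₂:ℝ)+2)^(1/D) * ((J₂:ℝ)+2)^(-(1/D))) := by
                rw [hε₁def]; ring
            _ = cr := by rw [hid, mul_one]
        calc (J₂:ℝ)+2 = (((J₂:ℝ)+2)^(1/D))^D := by
              rw [rpow_rpow hJ2p.le (show 1/D*D = 1 by field_simp), Real.rpow_one]
          _ ≤ (cr/(2*ε))^D :=
              Real.rpow_le_rpow (Real.rpow_nonneg hJ2p.le _) hby hD0.le
      calc (0:ENNReal) < ENNReal.ofReal ((cr/2)^D) :=
            ENNReal.ofReal_pos.mpr (Real.rpow_pos_of_pos (by linarith) _)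
        _ ≤ lowerContent ℓ D := hlow
    · have hup : upperContent ℓ D ≤
          ENNReal.ofReal ((2+1/(1/D-1)) * Cg^D * 2^(1-D)) := by
        rw [upperContent]
        refine limsup_le_of_le (by isBoundedDefault) ?_
        rw [(nhdsGT_basis (0:ℝ)).eventually_iff]
        refine ⟨Cg/2, by linarith, fun ε hεio => ?_⟩
        obtain ⟨hε, hεlt⟩ := hεio
        apply ENNReal.ofReal_le_ofReal
        have hV := vol_upper hD0 hD1 hCg hpos hsum hbg hε (by linarith)
        have hεp : (0:ℝ) < ε^(1-D) := Real.rpow_pos_of_pos hε _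
        rw [div_le_iff₀ hεp]
        have h2 : (2*ε)^(1-D) = 2^(1-D) * ε^(1-D) := Real.mul_rpow (by norm_num) hε.le
        calc stringVol ℓ ε ≤ (2+1/(1/D-1))*Cg^D*(2*ε)^(1-D) := hV
          _ = (2+1/(1/D-1))*Cg^D*2^(1-D) * ε^(1-D) := by rw [h2]; ring
      exact lt_of_le_of_lt hup ENNReal.ofReal_lt_top
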